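/- For every integer k ≥ 2, let c_n denote the coefficient of s^{nk-4} in the polynomial (∑_{j=0}^{k-2} s^j)^4 for n = 1, 2, 3. Then c_1 - c_2 + c_3 = k(4 - k^2)/3 - 1. -/

import Mathlib

set_option maxHeartbeats 1000000

open Polynomial

/-- Coefficient of a polynomial at an integer index; zero for negative indices. -/
def coeffZ (p : Polynomial ℤ) (n : ℤ) : ℤ :=
  if h : 0 ≤ n then p.coeff n.toNat else 0

def lgG (m t : ℕ) : ℤ := if t ≤ m then ((3 + (m - t)).choose 3 : ℤ) else 0

lemma coeffZ_natCast (p : Polynomial ℤ) (m : ℕ) : coeffZ p (m : ℤ) = p.coeff m := by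
  simp [coeffZ]

lemma lg_cast3 (n : ℕ) : (((3 + n).choose 3 : ℕ) : ℚ)
    = ((n : ℚ) + 1) * ((n : ℚ) + 2) * ((n : ℚ) + 3) / 6 := by
  induction n with
  | zero => norm_num
  | succ n ih =>
    have h : 3 + (n + 1) = (3 + n) + 1 := by ring
    rw [h, Nat.choose_succ_succ (3 + n) 2]
    push_cast
    push_cast at ih
    rw [ih, Nat.cast_choose_two]
    push_cast
    ring

open PowerSeries in
lemma lg_key (N m : ℕ) :
    ((∑ j ∈ Finset.range N, (X : Polynomial ℤ) ^ j) ^ 4).coeff m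
      = lgG m 0 - 4 * lgG m N + 6 * lgG m (2 * N) - 4 * lgG m (3 * N) + lgG m (4 * N) := by
  set I : ℤ⟦X⟧ := (invOneSubPow ℤ 4).val with hIdef
  have hI : ((1 - PowerSeries.X) ^ 4 : ℤ⟦X⟧) * I = 1 := by
    rw [← invOneSubPow_inv_eq_one_sub_pow]
    exact (invOneSubPow ℤ 4).inv_val
  have h1 : ((∑ j ∈ Finset.range N, (PowerSeries.X : ℤ⟦X⟧) ^ j)) * (1 - PowerSeries.X)
      = 1 - PowerSeries.X ^ N := by
    have h := geom_sum_mul (PowerSeries.X : ℤ⟦X⟧) N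
    linear_combination -h
  have hG : (((∑ j ∈ Finset.range N, (X : Polynomial ℤ) ^ j) ^ 4 : Polynomial ℤ) : ℤ⟦X⟧)
      = (1 - (PowerSeries.X : ℤ⟦X⟧) ^ N) ^ 4 * I := by
    have hcoe : (((∑ j ∈ Finset.range N, (X : Polynomial ℤ) ^ j) : Polynomial ℤ) : ℤ⟦X⟧)
        = ∑ j ∈ Finset.range N, (PowerSeries.X : ℤ⟦X⟧) ^ j := by
      rw [← Polynomial.coeToPowerSeries.ringHom_apply, map_sum]
      simp [Polynomial.coeToPowerSeries.ringHom_apply, Polynomial.coe_pow, Polynomial.coe_X]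
    rw [Polynomial.coe_pow, hcoe]
    calc (∑ j ∈ Finset.range N, (PowerSeries.X : ℤ⟦X⟧) ^ j) ^ 4
        = (∑ j ∈ Finset.range N, (PowerSeries.X : ℤ⟦X⟧) ^ j) ^ 4 * ((1 - PowerSeries.X) ^ 4 * I) := by
          rw [hI, mul_one]
      _ = ((∑ j ∈ Finset.range N, (PowerSeries.X : ℤ⟦X⟧) ^ j) * (1 - PowerSeries.X)) ^ 4 * I := by
          ring
      _ = (1 - PowerSeries.X ^ N) ^ 4 * I := by rw [h1]
  have expand : (1 - (PowerSeries.X : ℤ⟦X⟧) ^ N) ^ 4 * I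
      = I - (PowerSeries.C (R := ℤ) 4) * (PowerSeries.X ^ N * I)
        + (PowerSeries.C (R := ℤ) 6) * (PowerSeries.X ^ (2 * N) * I)
        - (PowerSeries.C (R := ℤ) 4) * (PowerSeries.X ^ (3 * N) * I)
        + PowerSeries.X ^ (4 * N) * I := by
    rw [map_ofNat, map_ofNat]
    ring
  have := congrArg (PowerSeries.coeff (R := ℤ) m) (hG.trans expand)
  rw [Polynomial.coeff_coe] at this
  rw [this]
  simp only [map_add, map_sub, PowerSeries.coeff_C_mul, PowerSeries.coeff_X_pow_mul', hIdef,
    invOneSubPow_val_succ_eq_mk_add_choose, coeff_mk, lgG]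
  simp [Nat.sub_zero]

theorem lg_signature_surface (k : ℕ) (hk : 2 ≤ k)
    (c : ℕ → ℤ)
    (hc : ∀ n, c n = coeffZ ((∑ j ∈ Finset.range (k - 1), (X : Polynomial ℤ) ^ j) ^ 4)
      ((n : ℤ) * k - 4)) :
    ((c 1 - c 2 + c 3 : ℤ) : ℚ) = (k : ℚ) * (4 - (k : ℚ) ^ 2) / 3 - 1 := by
  rcases Nat.lt_or_ge k 4 with h4 | h4
  · interval_cases k
    · -- k = 2
      have h1 : c 1 = 0 := by
        rw [hc 1]; norm_num [coeffZ]
      have h2 : c 2 = 1 := by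
        rw [hc 2, show ((2:ℕ):ℤ) * ((2:ℕ):ℤ) - 4 = ((0:ℕ):ℤ) by norm_num,
          coeffZ_natCast, lg_key]
        decide
      have h3 : c 3 = 0 := by
        rw [hc 3, show ((3:ℕ):ℤ) * ((2:ℕ):ℤ) - 4 = ((2:ℕ):ℤ) by norm_num,
          coeffZ_natCast, lg_key]
        decide
      rw [h1, h2, h3]; norm_num
    · -- k = 3
      have h1 : c 1 = 0 := by
        rw [hc 1]; norm_num [coeffZ]
      have h2 : c 2 = 6 := by
        rw [hc 2, show ((2:ℕ):ℤ) * ((3:ℕ):ℤ) - 4 = ((2:ℕ):ℤ) by norm_num,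
          coeffZ_natCast, lg_key]
        decide
      have h3 : c 3 = 0 := by
        rw [hc 3, show ((3:ℕ):ℤ) * ((3:ℕ):ℤ) - 4 = ((5:ℕ):ℤ) by norm_num,
          coeffZ_natCast, lg_key]
        decide
      rw [h1, h2, h3]; norm_num
  · obtain ⟨j, rfl⟩ : ∃ j, k = j + 4 := ⟨k - 4, by omega⟩
    have hN : j + 4 - 1 = j + 3 := rfl
    simp only [hN] at hc
    have e1 : c 1 = ((3 + j).choose 3 : ℤ) := by
      rw [hc 1, show ((1:ℕ):ℤ) * ((j + 4 : ℕ) : ℤ) - 4 = ((j:ℕ):ℤ) by push_cast; ring,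
        coeffZ_natCast, lg_key]
      simp only [lgG]
      rw [if_pos (Nat.zero_le _), if_neg (by omega), if_neg (by omega), if_neg (by omega),
        if_neg (by omega)]
      simp
    have e2 : c 2 = ((3 + (2*j+4)).choose 3 : ℤ) - 4 * ((3 + (j+1)).choose 3 : ℤ) := by
      rw [hc 2, show ((2:ℕ):ℤ) * ((j + 4 : ℕ) : ℤ) - 4 = ((2*j+4:ℕ):ℤ) by push_cast; ring,
        coeffZ_natCast, lg_key]
      simp only [lgG]
      rw [if_pos (Nat.zero_le _), if_pos (by omega : j + 3 ≤ 2*j+4), if_neg (by omega),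
        if_neg (by omega), if_neg (by omega), show 2*j+4 - (j+3) = j+1 by omega]
      simp
    have e3 : c 3 = ((3 + (3*j+8)).choose 3 : ℤ) - 4 * ((3 + (2*j+5)).choose 3 : ℤ)
        + 6 * ((3 + (j+2)).choose 3 : ℤ) := by
      rw [hc 3, show ((3:ℕ):ℤ) * ((j + 4 : ℕ) : ℤ) - 4 = ((3*j+8:ℕ):ℤ) by push_cast; ring,
        coeffZ_natCast, lg_key]
      simp only [lgG]
      rw [if_pos (Nat.zero_le _), if_pos (by omega : j + 3 ≤ 3*j+8),
        if_pos (by omega : 2*(j+3) ≤ 3*j+8), if_neg (by omega), if_neg (by omega),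
        show 3*j+8 - (j+3) = 2*j+5 by omega, show 3*j+8 - 2*(j+3) = j+2 by omega]
      simp
    rw [e1, e2, e3]
    push_cast [lg_cast3]
    ring
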